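/- Let T be a triangulated category equipped with a t-structure given by full subcategories (T^{≤0}, T^{≥0}), with truncation functor τ^{≤0} (right adjoint to the inclusion T^{≤0} ⊆ T). Let I ⊆ T be a thick subcategory (a triangulated full subcategory closed under direct summands). Then the pair of full subcategories (T^{≤0} ∩ I, T^{≥0} ∩ I) determines a t-structure on the triangulated category I if and only if τ^{≤0} X ∈ I for every X ∈ I. -/

import Mathlib

open CategoryTheory CategoryTheory.Limits CategoryTheory.Pretriangulated

namespace TStructureStmt

variable (C : Type*) [Category C] [Preadditive C] [HasZeroObject C] [HasShift C ℤ]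
  [∀ n : ℤ, (shiftFunctor C n).Additive] [Pretriangulated C]

/-- The pair of full subcategories `(tle, tge)` determines a t-structure on the
triangulated category `C` (conditions (i), (ii), (iii) of BBD):
(i) `Hom(K', K''[-1]) = 0` for `K' ∈ tle`, `K'' ∈ tge`;
(ii) `tle` is stable by `[1]` and `tge` by `[-1]`;
(iii) every `K` sits in a distinguished triangle `K' → K → K''[-1] → K'[1]`
with `K' ∈ tle` and `K'' ∈ tge`. -/
def IsTStructure (tle tge : C → Prop) : Prop :=
  (∀ (K' K'' : C), tle K' → tge K'' → ∀ f : K' ⟶ K''⟦(-1 : ℤ)⟧, f = 0) ∧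
  (∀ K : C, tle K → tle (K⟦(1 : ℤ)⟧)) ∧
  (∀ K : C, tge K → tge (K⟦(-1 : ℤ)⟧)) ∧
  (∀ K : C, ∃ (K' K'' : C) (f : K' ⟶ K) (g : K ⟶ K''⟦(-1 : ℤ)⟧)
      (h : K''⟦(-1 : ℤ)⟧ ⟶ K'⟦(1 : ℤ)⟧),
    tle K' ∧ tge K'' ∧ Triangle.mk f g h ∈ distTriang C)

/-- The pair of full subcategories `(tle ∩ J, tge ∩ J)` determines a t-structure on the
full triangulated subcategory of `C` on the objects satisfying `J`: the BBD conditions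
(i), (ii), (iii), with all objects constrained to lie in `J` and the truncation
triangles required to lie in the subcategory. -/
def IsTStructureOn (J tle tge : C → Prop) : Prop :=
  (∀ (K' K'' : C), J K' → J K'' → tle K' → tge K'' → ∀ f : K' ⟶ K''⟦(-1 : ℤ)⟧, f = 0) ∧
  (∀ K : C, J K → tle K → tle (K⟦(1 : ℤ)⟧)) ∧
  (∀ K : C, J K → tge K → tge (K⟦(-1 : ℤ)⟧)) ∧
  (∀ K : C, J K → ∃ (K' K'' : C) (f : K' ⟶ K) (g : K ⟶ K''⟦(-1 : ℤ)⟧)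
      (h : K''⟦(-1 : ℤ)⟧ ⟶ K'⟦(1 : ℤ)⟧),
    J K' ∧ J K'' ∧ tle K' ∧ tge K'' ∧ Triangle.mk f g h ∈ distTriang C)

/-- Let `(tle, tge)` be a t-structure on a triangulated category `C`, with truncation
functor `τ = τ^{≤0}` (right adjoint to the inclusion of `tle`, with counit `ε`). Let `I`
be a thick subcategory (a triangulated full subcategory, closed under isomorphisms and
direct summands). Then `(tle ∩ I, tge ∩ I)` determines a t-structure on the triangulated
category `I` if and only if `τ X ∈ I` for every `X ∈ I`. -/
theorem tStructure_restricts_to_thick_iff_truncation_stable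
    [HasBinaryBiproducts C]
    (tle tge : C → Prop) (ht : IsTStructure C tle tge)
    (τ : C ⥤ C) (ε : ∀ X : C, τ.obj X ⟶ X)
    (hε : ∀ {X Y : C} (f : X ⟶ Y), τ.map f ≫ ε Y = ε X ≫ f)
    (hτle : ∀ X : C, tle (τ.obj X))
    (hadj : ∀ (A X : C), tle A → ∀ f : A ⟶ X, ∃! g : A ⟶ τ.obj X, g ≫ ε X = f)
    (I : ObjectProperty C) [I.IsTriangulated] [I.IsClosedUnderIsomorphisms]
    (hsummands : ∀ X Y : C, I (X ⊞ Y) → I X) :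
    IsTStructureOn C I tle tge ↔ ∀ X : C, I X → I (τ.obj X) := by
  obtain ⟨h1, h2, h3, h4⟩ := ht
  -- Key: any truncation triangle identifies its first object with `τ.obj X`.
  have key : ∀ (X K' K'' : C) (f : K' ⟶ X) (g : X ⟶ K''⟦(-1 : ℤ)⟧)
      (h : K''⟦(-1 : ℤ)⟧ ⟶ K'⟦(1 : ℤ)⟧), tle K' → tge K'' →
      Triangle.mk f g h ∈ (distTriang C) → Nonempty (τ.obj X ≅ K') := by
    intro X K' K'' f g h hle hge hT
    -- ε X ≫ g = 0 since τ.obj X ∈ tle, K'' ∈ tge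
    have hz : ε X ≫ g = 0 := h1 _ _ (hτle X) hge _
    obtain ⟨u₁, hu₁⟩ : ∃ u₁ : τ.obj X ⟶ K', ε X = u₁ ≫ f := Pretriangulated.Triangle.coyoneda_exact₂ _ hT (ε X) hz
    -- u : τ.obj X ⟶ K', ε X = u ≫ f
    have u : τ.obj X ⟶ K' := u₁
    have hu : ε X = u₁ ≫ f := hu₁
    obtain ⟨v, hv, hvu⟩ := hadj K' X hle f
    -- v : K' ⟶ τ.obj X, v ≫ ε X = f
    have huv : u₁ ≫ v = 𝟙 (τ.obj X) := by
      obtain ⟨w, hw, hwu⟩ := hadj (τ.obj X) X (hτle X) (ε X)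
      have e1 : u₁ ≫ v = w := hwu _ (show (u₁ ≫ v) ≫ ε X = ε X by
        rw [Category.assoc, hv, ← hu])
      have e2 : 𝟙 (τ.obj X) = w := hwu _ (show 𝟙 (τ.obj X) ≫ ε X = ε X by simp)
      rw [e1, e2]
    have hvu' : v ≫ u₁ = 𝟙 K' := by
      have hz2 : ((v ≫ u₁ : K' ⟶ K') - 𝟙 K') ≫ f = 0 := by
        have h5 : v ≫ u₁ ≫ f = f := by rw [← hu, hv]
        rw [Preadditive.sub_comp, Category.id_comp, Category.assoc, h5, sub_self]
      obtain ⟨w, hw⟩ := Pretriangulated.Triangle.coyoneda_exact₂ _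
        (inv_rot_of_distTriang _ hT) ((v ≫ u₁ : K' ⟶ K') - 𝟙 K') hz2
      have hw0 : w = 0 := h1 K' (K''⟦(-1 : ℤ)⟧) hle (h3 _ hge) w
      rw [hw0, zero_comp] at hw
      exact sub_eq_zero.mp hw.symm.symm
    exact ⟨⟨u₁, v, huv, hvu'⟩⟩
  constructor
  · rintro ⟨-, -, -, j4⟩ X hX
    obtain ⟨K', K'', f, g, h, hK', _, hle, hge, hT⟩ := j4 X hX
    obtain ⟨e⟩ := key X K' K'' f g h hle hge hT
    exact I.prop_of_iso e.symm hK'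
  · intro hτI
    refine ⟨fun K' K'' _ _ hle hge f => h1 _ _ hle hge f,
      fun K _ hK => h2 K hK, fun K _ hK => h3 K hK, fun K hK => ?_⟩
    obtain ⟨K', K'', f, g, h, hle, hge, hT⟩ := h4 K
    obtain ⟨e⟩ := key K K' K'' f g h hle hge hT
    have hK'I : I K' := I.prop_of_iso e (hτI K hK)
    have hK''s : I (K''⟦(-1 : ℤ)⟧) := I.ext_of_isTriangulatedClosed₃ _ hT hK'I hK
    have hK''I : I K'' :=
      I.prop_of_iso ((shiftFunctorCompIsoId C (-1 : ℤ) (1 : ℤ) (by ring)).app K'')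
        (I.le_shift (1 : ℤ) _ hK''s)
    exact ⟨K', K'', f, g, h, hK'I, hK''I, hle, hge, hT⟩

end TStructureStmt
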